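/- Let G be a nonabelian finite 2-group containing a cyclic subgroup of index 2. Then G is isomorphic to a dihedral group, a generalized quaternion group, a semidihedral group, or a modular 2-group. -/

import Mathlib

lemma odd_coprime_pow {a : ℤ} (t : ℕ) (ha : Odd a) : IsCoprime ((2:ℤ)^t) a := by
  obtain ⟨b, rfl⟩ := ha
  have h : IsCoprime (2:ℤ) (2*b+1) := ⟨-b, 1, by ring⟩
  exact h.pow_left

lemma nt_lemma (m : ℕ) (hm : 2 ≤ m) (k : ℤ) (hk : (2:ℤ)^m ∣ k^2 - 1) :
    (2:ℤ)^m ∣ k - 1 ∨ (2:ℤ)^m ∣ k + 1 ∨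
    (2:ℤ)^m ∣ k - (2^(m-1) + 1) ∨ (2:ℤ)^m ∣ k - (2^(m-1) - 1) := by
  obtain ⟨t, rfl⟩ : ∃ t, m = t + 2 := ⟨m - 2, by omega⟩
  have h4 : (4:ℤ) ∣ k^2 - 1 := dvd_trans ⟨2^t, by ring⟩ hk
  have hkodd : ∃ a, k = 2*a + 1 := by
    rcases Int.even_or_odd k with ⟨c, rfl⟩ | ⟨a, rfl⟩
    · exfalso
      obtain ⟨e, he⟩ := h4
      have : (c+c)^2 = 4*(c*c) := by ring
      omega
    · exact ⟨a, rfl⟩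
  obtain ⟨a, rfl⟩ := hkodd
  have key : (2:ℤ)^t ∣ a * (a + 1) := by
    have h4' : ((4:ℤ) * 2^t) ∣ 4 * (a * (a+1)) := by
      have : (2*a+1)^2 - 1 = 4 * (a * (a+1)) := by ring
      rw [← this]; convert hk using 2; ring
    exact (mul_dvd_mul_iff_left (by norm_num : (4:ℤ) ≠ 0)).mp h4'
  have hpow : ((2:ℤ)^(t+2)) = 2^(t+1) * 2 := by ring
  have hpow2 : ((2:ℤ)^(t+2-1)) = 2^(t+1) := by norm_num
  rcases Int.even_or_odd a with ⟨c, hc⟩ | haodd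
  · have hdva : (2:ℤ)^t ∣ a := by
      refine (odd_coprime_pow t (⟨c, by omega⟩ : Odd (a+1))).dvd_of_dvd_mul_right ?_
      exact key
    obtain ⟨d, hd⟩ := hdva
    rcases Int.even_or_odd d with ⟨e, he⟩ | ⟨e, he⟩
    · left; exact ⟨e, by rw [hpow]; push_cast [hd, he]; ring⟩
    · right; right; left
      refine ⟨e, ?_⟩
      rw [hpow2, hpow]
      have : a = 2^t * (2*e+1) := by rw [hd, he]
      rw [this]; ring
  · have hdva : (2:ℤ)^t ∣ a + 1 := by
      refine (odd_coprime_pow t haodd).dvd_of_dvd_mul_left ?_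
      exact key
    obtain ⟨d, hd⟩ := hdva
    rcases Int.even_or_odd d with ⟨e, he⟩ | ⟨e, he⟩
    · right; left; exact ⟨e, by rw [hpow]; rw [show (2*a+1+1 : ℤ) = 2*(a+1) from by ring, hd, he]; ring⟩
    · right; right; right
      refine ⟨e, ?_⟩
      rw [hpow2, hpow]
      have : a + 1 = 2^t * (2*e+1) := by rw [hd, he]
      have ha' : a = 2^t * (2*e+1) - 1 := by omega
      rw [ha']; ring

/-- `G` is presented as the dihedral group of order `2 ^ n`. -/
def IsDihedralPres (G : Type*) [Group G] (n : ℕ) : Prop :=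
  ∃ x y : G, orderOf x = 2 ^ (n - 1) ∧ y ^ 2 = 1 ∧ y * x * y⁻¹ = x⁻¹ ∧
    Subgroup.closure {x, y} = ⊤

/-- `G` is presented as the generalized quaternion group of order `2 ^ n`. -/
def IsGeneralizedQuaternionPres (G : Type*) [Group G] (n : ℕ) : Prop :=
  ∃ x y : G, orderOf x = 2 ^ (n - 1) ∧ y ^ 2 = x ^ 2 ^ (n - 2) ∧ y * x * y⁻¹ = x⁻¹ ∧
    Subgroup.closure {x, y} = ⊤

/-- `G` is presented as the semidihedral group of order `2 ^ n`. -/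
def IsSemidihedralPres (G : Type*) [Group G] (n : ℕ) : Prop :=
  ∃ x y : G, orderOf x = 2 ^ (n - 1) ∧ y ^ 2 = 1 ∧ y * x * y⁻¹ = x ^ 2 ^ (n - 2) * x⁻¹ ∧
    Subgroup.closure {x, y} = ⊤

/-- `G` is presented as the modular 2-group of order `2 ^ n`. -/
def IsModularPres (G : Type*) [Group G] (n : ℕ) : Prop :=
  ∃ x y : G, orderOf x = 2 ^ (n - 1) ∧ y ^ 2 = 1 ∧ y * x * y⁻¹ = x ^ (2 ^ (n - 2) + 1) ∧
    Subgroup.closure {x, y} = ⊤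

/-- A nonabelian finite 2-group with a cyclic subgroup of index 2 is dihedral,
generalized quaternion, semidihedral or modular. -/
theorem stmt_7 (G : Type*) [Group G] [Finite G] (h2 : ∃ n : ℕ, Nat.card G = 2 ^ n)
    (hnab : ¬ ∀ a b : G, a * b = b * a)
    (H : Subgroup G) (hcyc : IsCyclic H) (hidx : H.index = 2) :
    ∃ n : ℕ, Nat.card G = 2 ^ n ∧
      (IsDihedralPres G n ∨ IsGeneralizedQuaternionPres G n ∨
        IsSemidihedralPres G n ∨ IsModularPres G n) := by
  obtain ⟨n, hcard⟩ := h2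
  refine ⟨n, hcard, ?_⟩
  obtain ⟨g, hg⟩ := hcyc.exists_generator
  set x : G := (g : G) with hxdef
  have hxH : x ∈ H := g.2
  have hHx : ∀ h : G, h ∈ H → ∃ i : ℤ, x ^ i = h := by
    intro h hh
    obtain ⟨i, hi⟩ := Subgroup.mem_zpowers_iff.mp (hg ⟨h, hh⟩)
    refine ⟨i, ?_⟩
    have : ((g ^ i : H) : G) = h := by rw [hi]
    rw [← this]; push_cast; rfl
  have hn1 : 1 ≤ n := by
    by_contra hn
    have h0 : n = 0 := by omega
    have hci := Subgroup.card_mul_index H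
    rw [hidx, hcard, h0] at hci
    simp at hci
  have hcardH : Nat.card H = 2^(n-1) := by
    have hci := Subgroup.card_mul_index H
    rw [hidx, hcard] at hci
    have h2n : 2^n = 2^(n-1)*2 := by rw [← pow_succ]; congr 1; omega
    omega
  have hox : orderOf x = 2^(n-1) := by
    rw [hxdef, Subgroup.orderOf_coe, orderOf_eq_card_of_forall_mem_zpowers hg, hcardH]
  obtain ⟨y, hyH⟩ : ∃ y : G, y ∉ H := by
    by_contra hy
    push_neg at hy
    have : H = ⊤ := by rwa [Subgroup.eq_top_iff']
    rw [this, Subgroup.index_top] at hidx; omega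
  have hyxyH : y * x * y⁻¹ ∈ H := by
    rw [Subgroup.mul_mem_iff_of_index_two hidx, Subgroup.mul_mem_iff_of_index_two hidx,
      H.inv_mem_iff]
    tauto
  obtain ⟨k, hk⟩ := hHx _ hyxyH
  obtain ⟨j, hj⟩ := hHx _ (Subgroup.sq_mem_of_index_two hidx y)
  have hxe : ∀ a b : ℤ, (2:ℤ)^(n-1) ∣ a - b → x ^ a = x ^ b := by
    intro a b hab
    rw [← orderOf_dvd_sub_iff_zpow_eq_zpow, hox]
    exact_mod_cast hab
  have hxe' : ∀ a b : ℤ, x ^ a = x ^ b → (2:ℤ)^(n-1) ∣ a - b := by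
    intro a b hab
    have h := orderOf_dvd_sub_iff_zpow_eq_zpow.mpr hab
    rw [hox] at h
    exact_mod_cast h
  have hconj : ∀ a : ℤ, y * x ^ a * y⁻¹ = x ^ (k * a) := by
    intro a
    calc y * x ^ a * y⁻¹ = (y * x * y⁻¹) ^ a := conj_zpow.symm
    _ = (x ^ k) ^ a := by rw [hk]
    _ = x ^ (k * a) := by rw [← zpow_mul]
  have hk2 : (2:ℤ)^(n-1) ∣ k*k - 1 := by
    have h1 : y * (y * x * y⁻¹) * y⁻¹ = x ^ (k*k) := by rw [← hk, hconj]
    have h2 : y * (y * x * y⁻¹) * y⁻¹ = y^2 * x * (y^2)⁻¹ := by rw [pow_two]; group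
    have h3 : y^2 * x * (y^2)⁻¹ = x := by rw [← hj]; group
    have h4 : x ^ (k*k) = x ^ (1:ℤ) := by rw [← h1, h2, h3, zpow_one]
    exact hxe' _ _ h4
  have hjk : (2:ℤ)^(n-1) ∣ k*j - j := by
    have h1 : y * x^j * y⁻¹ = x^j := by rw [hj]; group
    have h2 : x ^ (k*j) = x ^ j := by rw [← hconj, h1]
    exact hxe' _ _ h2
  have hclos : ∀ z : G, z ∉ H → Subgroup.closure {x, z} = ⊤ := by
    intro z hz
    set K := Subgroup.closure ({x, z} : Set G) with hK
    have hxK : x ∈ K := Subgroup.subset_closure (by simp)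
    have hzK : z ∈ K := Subgroup.subset_closure (by simp)
    have hHK : H ≤ K := by
      intro h hh
      obtain ⟨i, hi⟩ := hHx h hh
      rw [← hi]; exact zpow_mem hxK i
    have hrel := Subgroup.relIndex_mul_index hHK
    rw [hidx] at hrel
    have hdvd : K.index ∣ 2 := Dvd.intro_left _ hrel
    rcases (Nat.Prime.eq_one_or_self_of_dvd Nat.prime_two _ hdvd) with h1 | h1
    · exact Subgroup.index_eq_one.mp h1
    · exfalso
      rw [h1] at hrel
      have : H.relIndex K = 1 := by omega
      exact hz (Subgroup.relIndex_eq_one.mp this hzK)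
  have hnotk1 : ¬ ((2:ℤ)^(n-1) ∣ k - 1) := by
    intro hd
    have h1 : y * x * y⁻¹ = x := by
      rw [← hk]
      have := hxe k 1 (by simpa using hd)
      rw [this, zpow_one]
    have hcomm : y * x = x * y := mul_inv_eq_iff_eq_mul.mp h1
    apply hnab
    have hcl := hclos y hyH
    have hle1 : Subgroup.closure ({x, y} : Set G) ≤ Subgroup.centralizer {x} := by
      rw [Subgroup.closure_le]
      intro w hw
      rcases hw with rfl | hw
      · exact Subgroup.mem_centralizer_iff.mpr (by simp)
      · simp only [Set.mem_singleton_iff] at hw; subst hw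
        exact Subgroup.mem_centralizer_iff.mpr (by simpa using hcomm.symm)
    have hle2 : Subgroup.closure ({x, y} : Set G) ≤ Subgroup.centralizer {y} := by
      rw [Subgroup.closure_le]
      intro w hw
      rcases hw with rfl | hw
      · exact Subgroup.mem_centralizer_iff.mpr (by simpa using hcomm)
      · simp only [Set.mem_singleton_iff] at hw; subst hw
        exact Subgroup.mem_centralizer_iff.mpr (by simp)
    intro a b
    have hbx : x * b = b * x := Subgroup.mem_centralizer_iff.mp (hle1 (hcl ▸ Subgroup.mem_top b)) x rfl
    have hby : y * b = b * y := Subgroup.mem_centralizer_iff.mp (hle2 (hcl ▸ Subgroup.mem_top b)) y rfl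
    have hle3 : Subgroup.closure ({x, y} : Set G) ≤ Subgroup.centralizer {b} := by
      rw [Subgroup.closure_le]
      intro w hw
      rcases hw with rfl | hw
      · exact Subgroup.mem_centralizer_iff.mpr (by simpa using hbx.symm)
      · simp only [Set.mem_singleton_iff] at hw; subst hw
        exact Subgroup.mem_centralizer_iff.mpr (by simpa using hby.symm)
    exact (Subgroup.mem_centralizer_iff.mp (hle3 (hcl ▸ Subgroup.mem_top a)) b rfl).symm
  have hn3 : 3 ≤ n := by
    by_contra hlt
    have hv : n - 1 = 0 ∨ n - 1 = 1 := by omega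
    rcases hv with hv | hv
    · rw [hv, pow_zero] at hnotk1
      exact hnotk1 (one_dvd _)
    · rw [hv, pow_one] at hnotk1 hk2
      rcases Int.even_or_odd k with ⟨c, rfl⟩ | ⟨c, rfl⟩
      · obtain ⟨e, he⟩ := hk2
        have hcc : (c+c)*(c+c) = 4*(c*c) := by ring
        omega
      · exact hnotk1 ⟨c, by ring⟩
  have hp1 : (2:ℤ)^(n-1) = 2*2^(n-2) := by
    rw [← pow_succ']; congr 1; omega
  -- square formula for y * x^t
  have hinvconj : y⁻¹ * x * y = x ^ k := by
    have h1 : y * x ^ k * y⁻¹ = x := by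
      rw [hconj]
      have := hxe (k*k) 1 (by simpa using hk2)
      rw [this, zpow_one]
    have h2 : y⁻¹ * (y * x ^ k * y⁻¹) * y = y⁻¹ * x * y := by rw [h1]
    rw [← h2]; group
  have hsq : ∀ t : ℤ, (y * x ^ t)^2 = x ^ (j + k*t + t) := by
    intro t
    have hinv : y⁻¹ * x ^ t * y = x ^ (k*t) := by
      calc y⁻¹ * x ^ t * y = (y⁻¹ * x * y) ^ t := by
            have := conj_zpow (i := t) (a := y⁻¹) (b := x)
            simpa using this.symm
      _ = (x ^ k) ^ t := by rw [hinvconj]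
      _ = x ^ (k*t) := by rw [← zpow_mul]
    calc (y * x ^ t)^2 = y * (y * (y⁻¹ * x ^ t * y)) * x ^ t := by rw [pow_two]; group
    _ = y * (y * x ^ (k*t)) * x ^ t := by rw [hinv]
    _ = x ^ j * x ^ (k*t) * x ^ t := by rw [hj, pow_two]; group
    _ = x ^ (j + k*t + t) := by rw [← zpow_add, ← zpow_add]
  have hcastexp : ∀ m : ℕ, x ^ ((2:ℤ)^m) = x ^ (2^m : ℕ) := by
    intro m
    rw [← zpow_natCast]
    congr 1
  -- Case A : k ≡ -1
  have caseA : (2:ℤ)^(n-1) ∣ k + 1 →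
      (IsDihedralPres G n ∨ IsGeneralizedQuaternionPres G n ∨
        IsSemidihedralPres G n ∨ IsModularPres G n) := by
    intro hA
    have hxk : y * x * y⁻¹ = x⁻¹ := by
      rw [← hk, ← zpow_neg_one]
      exact hxe k (-1) (by simpa using hA)
    have h2j : (2:ℤ)^(n-2) ∣ j := by
      have hd2 : (2:ℤ)^(n-1) ∣ 2*j := by
        have h1 : (2:ℤ)^(n-1) ∣ j*(k+1) := Dvd.dvd.mul_left hA j
        have he : 2*j = j*(k+1) - (k*j - j) := by ring
        rw [he]; exact dvd_sub h1 hjk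
      rw [hp1] at hd2
      exact (mul_dvd_mul_iff_left (two_ne_zero)).mp hd2
    obtain ⟨s, hs⟩ := h2j
    rcases Int.even_or_odd s with ⟨e, he⟩ | ⟨e, he⟩
    · refine Or.inl ⟨x, y, hox, ?_, hxk, hclos y hyH⟩
      rw [← hj]
      have : x ^ j = x ^ (0:ℤ) := hxe j 0 ⟨e, by rw [hs, he, hp1]; ring⟩
      rw [this, zpow_zero]
    · refine Or.inr (Or.inl ⟨x, y, hox, ?_, hxk, hclos y hyH⟩)
      rw [← hj, ← hcastexp]
      exact hxe j _ ⟨e, by rw [hs, he, hp1]; ring⟩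
  rcases nt_lemma (n-1) (by omega) k (by rw [sq]; exact hk2) with hcase | hcase | hcase | hcase
  · exact absurd hcase hnotk1
  · exact caseA hcase
  · -- modular : k ≡ 2^(n-2) + 1
    by_cases hA : (2:ℤ)^(n-1) ∣ k + 1
    · exact caseA hA
    have hee : n - 1 - 1 = n - 2 := by omega
    rw [hee] at hcase
    have hn4 : 4 ≤ n := by
      by_contra hlt
      have h3 : n = 3 := by omega
      apply hA
      rw [h3] at hcase ⊢
      norm_num at hcase ⊢
      omega
    have hp23 : (2:ℤ)^(n-2) = 2*2^(n-3) := by rw [← pow_succ']; congr 1; omega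
    have hp34 : (2:ℤ)^(n-3) = 2*2^(n-4) := by rw [← pow_succ']; congr 1; omega
    have hjeven : (2:ℤ) ∣ j := by
      have h1 : (2:ℤ)^(n-1) ∣ j * (2^(n-2)) := by
        have he : j * ((2:ℤ)^(n-2)) = (k*j - j) - j*(k - (2^(n-2)+1)) := by ring
        rw [he]; exact dvd_sub hjk (Dvd.dvd.mul_left hcase j)
      rw [hp1] at h1
      have h2 : (2:ℤ) * 2^(n-2) ∣ j * 2^(n-2) := h1
      exact (mul_dvd_mul_iff_right (pow_ne_zero _ two_ne_zero)).mp h2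
    obtain ⟨j', hj'⟩ := hjeven
    have hu'odd : Odd ((2:ℤ)^(n-3) + 1) := ⟨2^(n-4), by rw [hp34]⟩
    obtain ⟨a, b, hbez⟩ := odd_coprime_pow (n-2) hu'odd
    obtain ⟨c, hc⟩ := hcase
    set t : ℤ := -(j'*b) with ht
    have hdv : j + k*t + t = 2^(n-1) * (j'*a - j'*(b*c)) := by
      have hk' : k = 2^(n-1)*c + (2^(n-2)+1) := by linarith [hc]
      rw [hp23] at hbez
      rw [hj', hk', ht, hp1, hp23]
      linear_combination (-2*j') * hbez
    refine Or.inr (Or.inr (Or.inr ⟨x, y * x ^ t, hox, ?_, ?_, ?_⟩))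
    · rw [hsq t]
      have : x ^ (j + k*t + t) = x ^ (0:ℤ) := hxe _ 0 ⟨j'*a - j'*(b*c), by rw [hdv]; ring⟩
      rw [this, zpow_zero]
    · have hgr : (y * x ^ t) * x * (y * x ^ t)⁻¹ = y * x * y⁻¹ := by group
      rw [hgr, ← hk]
      have : x ^ k = x ^ ((2:ℤ)^(n-2) + 1) := hxe k _ ⟨c, by linarith [hc]⟩
      rw [this]
      rw [show ((2:ℤ)^(n-2) + 1) = ((2^(n-2) + 1 : ℕ) : ℤ) by push_cast; ring, zpow_natCast]
    · apply hclos
      intro hmem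
      apply hyH
      have hyy : y = (y * x ^ t) * (x ^ t)⁻¹ := by group
      rw [hyy]
      exact H.mul_mem hmem (H.inv_mem (zpow_mem hxH t))
  · -- semidihedral : k ≡ 2^(n-2) - 1
    have hee : n - 1 - 1 = n - 2 := by omega
    rw [hee] at hcase
    have hn4 : 4 ≤ n := by
      by_contra hlt
      have h3 : n = 3 := by omega
      apply hnotk1
      have : k - 1 = k - (2^(n-2) - 1) := by rw [h3]; norm_num
      rw [this]; exact hcase
    have hp23 : (2:ℤ)^(n-2) = 2*2^(n-3) := by rw [← pow_succ']; congr 1; omega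
    have hp34 : (2:ℤ)^(n-3) = 2*2^(n-4) := by rw [← pow_succ']; congr 1; omega
    have hwodd : Odd ((2:ℤ)^(n-3) - 1) := ⟨2^(n-4) - 1, by rw [hp34]; ring⟩
    have hjdvd : (2:ℤ)^(n-2) ∣ j := by
      have h1 : (2:ℤ)^(n-1) ∣ j * ((2:ℤ)^(n-2) - 2) := by
        have he : j * ((2:ℤ)^(n-2) - 2) = (k*j - j) - j*(k - (2^(n-2) - 1)) := by ring
        rw [he]; exact dvd_sub hjk (Dvd.dvd.mul_left hcase j)
      have h2 : (2:ℤ) * 2^(n-2) ∣ 2 * (j * (2^(n-3) - 1)) := by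
        rw [← hp1]
        convert h1 using 1
        rw [hp23]; ring
      have h3 : (2:ℤ)^(n-2) ∣ j * (2^(n-3) - 1) := (mul_dvd_mul_iff_left two_ne_zero).mp h2
      exact (odd_coprime_pow (n-2) hwodd).dvd_of_dvd_mul_right h3
    obtain ⟨s, hs⟩ := hjdvd
    have hrel : ∀ z : G, z * x * z⁻¹ = y * x * y⁻¹ → z * x * z⁻¹ = x ^ (2^(n-2) : ℕ) * x⁻¹ := by
      intro z hz
      rw [hz, ← hk]
      have h1 : x ^ k = x ^ ((2:ℤ)^(n-2) - 1) := hxe k _ (by simpa using hcase)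
      rw [h1, zpow_sub, zpow_one, hcastexp]
    rcases Int.even_or_odd s with ⟨e, he⟩ | ⟨e, he⟩
    · refine Or.inr (Or.inr (Or.inl ⟨x, y, hox, ?_, hrel y rfl, hclos y hyH⟩))
      rw [← hj]
      have : x ^ j = x ^ (0:ℤ) := hxe j 0 ⟨e, by rw [hs, he, hp1, hp23]; ring⟩
      rw [this, zpow_zero]
    · obtain ⟨c, hc⟩ := hcase
      refine Or.inr (Or.inr (Or.inl ⟨x, y * x ^ (1:ℤ), hox, ?_, ?_, ?_⟩))
      · rw [hsq 1]
        have hk' : k = 2^(n-1)*c + (2^(n-2) - 1) := by linarith [hc]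
        have : x ^ (j + k*1 + 1) = x ^ (0:ℤ) := by
          refine hxe _ 0 ⟨e + c + 1, ?_⟩
          rw [hs, he, hk', hp1]
          ring
        rw [this, zpow_zero]
      · exact hrel _ (by group)
      · apply hclos
        intro hmem
        apply hyH
        have hyy : y = (y * x ^ (1:ℤ)) * (x ^ (1:ℤ))⁻¹ := by group
        rw [hyy]
        exact H.mul_mem hmem (H.inv_mem (zpow_mem hxH 1))
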